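/- Let W_1, …, W_r be m×n complex matrices with Σ_{i=1}^r W_i* W_i = I_n, let f be a convex function on an open interval I, and let A be a Hermitian m×m matrix with spectrum in I. Then for every k = 1, …, n, Σ_{i=1}^k λ_i(f(Σ_j W_j* A W_j)) ≤ Σ_{i=1}^k λ_i(Σ_j W_j* f(A) W_j). -/

import Mathlib

open scoped ComplexOrder
open Matrix

/-- The eigenvalues of a (Hermitian) matrix arranged in non-increasing order, counted
with multiplicity; junk value `0` for non-Hermitian matrices. -/
noncomputable def eigDesc {n : ℕ} (A : Matrix (Fin n) (Fin n) ℂ) (i : Fin n) : ℝ :=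
  if h : A.IsHermitian then (h.eigenvalues ∘ Tuple.sort h.eigenvalues) i.rev else 0

section helpers
open scoped InnerProductSpace

private lemma card_filter_lt' {n k : ℕ} (hk : k ≤ n) :
    (Finset.filter (fun i : Fin n => (i : ℕ) < k) Finset.univ).card = k := by
  have : Finset.filter (fun i : Fin n => (i : ℕ) < k) Finset.univ
      = Finset.map (Fin.castLEEmb hk) Finset.univ := by
    ext i
    simp only [Finset.mem_filter, Finset.mem_univ, true_and, Finset.mem_map,
      Fin.castLEEmb_apply]
    constructor
    · intro h; exact ⟨⟨i, h⟩, by simp [Fin.ext_iff]⟩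
    · rintro ⟨j, rfl⟩; simpa using j.isLt
  rw [this]; simp

private lemma core_antitone {n k : ℕ} (hk : k ≤ n) (d s : Fin n → ℝ) (hd : Antitone d)
    (hs0 : ∀ p, 0 ≤ s p) (hs1 : ∀ p, s p ≤ 1) (hsk : ∑ p, s p = k) :
    ∑ p, s p * d p ≤ ∑ i ∈ Finset.filter (fun i : Fin n => (i : ℕ) < k) Finset.univ, d i := by
  rcases Nat.eq_zero_or_pos k with rfl | hkpos
  · have hz : ∀ p ∈ Finset.univ, s p = 0 := by
      intro p _
      have := (Finset.sum_eq_zero_iff_of_nonneg (fun p _ => hs0 p)).mp (by simpa using hsk)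
      exact this p (Finset.mem_univ p)
    have : ∑ p, s p * d p = 0 := Finset.sum_eq_zero fun p hp => by rw [hz p hp, zero_mul]
    simp [this]
  · have hkn : k - 1 < n := by omega
    set c : ℝ := d ⟨k - 1, hkn⟩ with hc
    have key : ∀ p : Fin n, s p * d p ≤
        (if (p : ℕ) < k then d p else 0) + (s p - (if (p : ℕ) < k then 1 else 0)) * c := by
      intro p
      by_cases h : (p : ℕ) < k
      · have hdp : c ≤ d p := hd (show p ≤ ⟨k - 1, hkn⟩ by simp [Fin.le_def]; omega)
        simp only [h, if_pos]
        nlinarith [hs1 p, hs0 p]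
      · have hdp : d p ≤ c := hd (show (⟨k - 1, hkn⟩ : Fin n) ≤ p by simp [Fin.le_def]; omega)
        simp only [h, if_neg, not_false_iff]
        nlinarith [hs0 p, hs1 p]
    calc ∑ p, s p * d p ≤ ∑ p : Fin n, ((if (p : ℕ) < k then d p else 0)
          + (s p - (if (p : ℕ) < k then 1 else 0)) * c) := Finset.sum_le_sum fun p _ => key p
      _ = ∑ i ∈ Finset.filter (fun i : Fin n => (i : ℕ) < k) Finset.univ, d i := by
          rw [Finset.sum_add_distrib]
          have h1 : ∑ p : Fin n, (if (p : ℕ) < k then d p else 0)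
              = ∑ i ∈ Finset.filter (fun i : Fin n => (i : ℕ) < k) Finset.univ, d i := by
            rw [Finset.sum_ite, Finset.sum_const_zero, add_zero]
          have h2 : ∑ p : Fin n, (s p - (if (p : ℕ) < k then 1 else 0)) * c = 0 := by
            rw [← Finset.sum_mul, Finset.sum_sub_distrib, hsk]
            rw [Finset.sum_ite, Finset.sum_const_zero, add_zero, Finset.sum_const,
              card_filter_lt' hk]
            simp
          rw [h1, h2, add_zero]

private lemma sum_mul_le_sorted {n k : ℕ} (hk : k ≤ n) (lam t : Fin n → ℝ)
    (ht0 : ∀ p, 0 ≤ t p) (ht1 : ∀ p, t p ≤ 1) (htk : ∑ p, t p = k) :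
    ∑ p, t p * lam p ≤
      ∑ i ∈ Finset.filter (fun i : Fin n => (i : ℕ) < k) Finset.univ,
        (lam ∘ Tuple.sort lam) i.rev := by
  set π : Equiv.Perm (Fin n) := (Fin.revPerm).trans (Tuple.sort lam) with hπdef
  have hπ : ∀ i, π i = Tuple.sort lam i.rev := fun i => rfl
  have hanti : Antitone (fun i => lam (π i)) := by
    intro i j hij
    have := Tuple.monotone_sort lam (show j.rev ≤ i.rev from Fin.rev_le_rev.mpr hij)
    simpa [hπ] using this
  have hsum : ∑ p, t p * lam p = ∑ p, (t (π p)) * lam (π p) :=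
    (Equiv.sum_comp π (fun p => t p * lam p)).symm
  rw [hsum]
  exact core_antitone hk (fun i => lam (π i)) (fun i => t (π i)) hanti
    (fun p => ht0 _) (fun p => ht1 _) (by rw [Equiv.sum_comp π t, htk])

private lemma dot_expand {m : ℕ} (M : Matrix (Fin m) (Fin m) ℂ) (hM : M.IsHermitian)
    (a : OrthonormalBasis (Fin m) ℂ (EuclideanSpace ℂ (Fin m))) (ν : Fin m → ℝ)
    (hMa : ∀ q, M *ᵥ ⇑(a q) = ((ν q : ℝ) : ℂ) • ⇑(a q)) (x : EuclideanSpace ℂ (Fin m)) :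
    star ⇑x ⬝ᵥ (M *ᵥ ⇑x) = ((∑ q, ν q * Complex.normSq ⟪a q, x⟫_ℂ : ℝ) : ℂ) := by
  have hy : star ⇑x ⬝ᵥ (M *ᵥ ⇑x)
      = ⟪x, (WithLp.equiv 2 (Fin m → ℂ)).symm (M *ᵥ ⇑x)⟫_ℂ := by rw [dotProduct_comm]; rfl
  have h1 : ∀ q, ⟪a q, (WithLp.equiv 2 (Fin m → ℂ)).symm (M *ᵥ ⇑x)⟫_ℂ
      = ((ν q : ℝ) : ℂ) * ⟪a q, x⟫_ℂ := by
    intro q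
    have e1 : ⟪a q, (WithLp.equiv 2 (Fin m → ℂ)).symm (M *ᵥ ⇑x)⟫_ℂ
        = star ⇑(a q) ⬝ᵥ (M *ᵥ ⇑x) := by rw [dotProduct_comm]; rfl
    have e2 : star ⇑(a q) ⬝ᵥ (M *ᵥ ⇑x) = (star ⇑(a q) ᵥ* M) ⬝ᵥ ⇑x :=
      Matrix.dotProduct_mulVec _ _ _
    have e3 : star ⇑(a q) ᵥ* M = star (M *ᵥ ⇑(a q)) := by
      rw [Matrix.star_mulVec, hM.eq]
    rw [e1, e2, e3, hMa q]
    have : star (((ν q : ℝ) : ℂ) • ⇑(a q)) = ((ν q : ℝ) : ℂ) • star ⇑(a q) := by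
      rw [star_smul]; congr 1; simp
    rw [this, smul_dotProduct]
    rw [EuclideanSpace.inner_eq_star_dotProduct, dotProduct_comm]; rfl
  rw [hy, ← (a.sum_inner_mul_inner x ((WithLp.equiv 2 (Fin m → ℂ)).symm (M *ᵥ ⇑x)))]
  push_cast
  refine Finset.sum_congr rfl fun q _ => ?_
  rw [h1 q]
  have hconj : ⟪x, a q⟫_ℂ = starRingEnd ℂ ⟪a q, x⟫_ℂ := (inner_conj_symm _ _).symm
  rw [hconj, Complex.normSq_eq_conj_mul_self]
  ring

private lemma parseval_one {m : ℕ} (a b : OrthonormalBasis (Fin m) ℂ (EuclideanSpace ℂ (Fin m)))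
    (p : Fin m) : ∑ q, Complex.normSq ⟪a q, b p⟫_ℂ = 1 := by
  have h := dot_expand 1 (Matrix.isHermitian_one) a (fun _ => 1)
    (fun q => by rw [Matrix.one_mulVec]; simp) (b p)
  rw [Matrix.one_mulVec] at h
  have hl : star ⇑(b p) ⬝ᵥ ⇑(b p) = ⟪b p, b p⟫_ℂ := by
    rw [EuclideanSpace.inner_eq_star_dotProduct, dotProduct_comm]
  rw [hl, inner_self_eq_norm_sq_to_K] at h
  have hb : (‖b p‖ : ℂ) ^ 2 = 1 := by rw [b.orthonormal.1 p]; norm_num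
  have h2 : ((∑ q, 1 * Complex.normSq ⟪a q, b p⟫_ℂ : ℝ) : ℂ) = 1 := by rw [← h]; exact hb
  have h3 : (∑ q, 1 * Complex.normSq ⟪a q, b p⟫_ℂ : ℝ) = 1 := by exact_mod_cast h2
  simpa using h3

private lemma kyFan {n k : ℕ} (hk : k ≤ n) (C : Matrix (Fin n) (Fin n) ℂ) (hC : C.IsHermitian)
    (e : OrthonormalBasis (Fin n) ℂ (EuclideanSpace ℂ (Fin n))) (lam : Fin n → ℝ)
    (hCe : ∀ p, C *ᵥ ⇑(e p) = ((lam p : ℝ) : ℂ) • ⇑(e p))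
    (w : OrthonormalBasis (Fin n) ℂ (EuclideanSpace ℂ (Fin n)))
    (T : Finset (Fin n)) (hT : T.card = k) :
    ∑ i ∈ T, Complex.re (star ⇑(w i) ⬝ᵥ (C *ᵥ ⇑(w i))) ≤
      ∑ i ∈ Finset.filter (fun i : Fin n => (i : ℕ) < k) Finset.univ,
        (lam ∘ Tuple.sort lam) i.rev := by
  set t : Fin n → ℝ := fun p => ∑ i ∈ T, Complex.normSq ⟪e p, w i⟫_ℂ with ht
  have hswap : ∑ i ∈ T, Complex.re (star ⇑(w i) ⬝ᵥ (C *ᵥ ⇑(w i))) = ∑ p, t p * lam p := by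
    have h1 : ∀ i, Complex.re (star ⇑(w i) ⬝ᵥ (C *ᵥ ⇑(w i)))
        = ∑ p, lam p * Complex.normSq ⟪e p, w i⟫_ℂ := by
      intro i
      rw [dot_expand C hC e lam hCe (w i), Complex.ofReal_re]
    rw [Finset.sum_congr rfl fun i _ => h1 i, Finset.sum_comm]
    refine Finset.sum_congr rfl fun p _ => ?_
    rw [ht]
    simp only [Finset.mul_sum, Finset.sum_mul]
    exact Finset.sum_congr rfl fun i _ => mul_comm _ _
  rw [hswap]
  refine sum_mul_le_sorted hk lam t (fun p => Finset.sum_nonneg fun i _ => Complex.normSq_nonneg _)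
    (fun p => ?_) ?_
  · calc t p ≤ ∑ i : Fin n, Complex.normSq ⟪e p, w i⟫_ℂ :=
        Finset.sum_le_sum_of_subset_of_nonneg (Finset.subset_univ T)
          (fun i _ _ => Complex.normSq_nonneg _)
      _ = 1 := by
        have hws := parseval_one w e p
        calc ∑ i : Fin n, Complex.normSq ⟪e p, w i⟫_ℂ
            = ∑ i : Fin n, Complex.normSq ⟪w i, e p⟫_ℂ := by
              refine Finset.sum_congr rfl fun i _ => ?_
              rw [← inner_conj_symm (e p) (w i), Complex.normSq_conj]
          _ = 1 := hws
  · rw [Finset.sum_comm]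
    rw [Finset.sum_congr rfl fun i (_ : i ∈ T) => parseval_one e w i]
    simp [hT]

private lemma cfc_mulVec' {m : ℕ} {A : Matrix (Fin m) (Fin m) ℂ} (hA : A.IsHermitian) (f : ℝ → ℝ)
    (q : Fin m) :
    cfc f A *ᵥ ⇑(hA.eigenvectorBasis q)
      = ((f (hA.eigenvalues q) : ℝ) : ℂ) • ⇑(hA.eigenvectorBasis q) := by
  rw [hA.cfc_eq, Matrix.IsHermitian.cfc, Unitary.conjStarAlgAut_apply, ← Matrix.mulVec_mulVec, ← Matrix.mulVec_mulVec,
    hA.star_eigenvectorUnitary_mulVec, Matrix.diagonal_mulVec_single]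
  have hsingle : (Pi.single q ((RCLike.ofReal ∘ f ∘ hA.eigenvalues) q * 1) : Fin m → ℂ)
      = ((f (hA.eigenvalues q) : ℝ) : ℂ) • (Pi.single q 1 : Fin m → ℂ) := by
    funext i
    by_cases h : i = q <;> simp [h, Pi.single_apply]
  rw [hsingle, Matrix.mulVec_smul, hA.eigenvectorUnitary_mulVec]

private lemma isHermitian_conj_sum {m n r : ℕ} (W : Fin r → Matrix (Fin m) (Fin n) ℂ)
    {M : Matrix (Fin m) (Fin m) ℂ} (hM : M.IsHermitian) :
    (∑ j, (W j)ᴴ * M * W j).IsHermitian := by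
  rw [Matrix.IsHermitian, Matrix.conjTranspose_sum]
  exact Finset.sum_congr rfl fun j _ => (Matrix.isHermitian_conjTranspose_mul_mul (W j) hM)

private lemma jensen_step {m n r : ℕ} (W : Fin r → Matrix (Fin m) (Fin n) ℂ)
    (hW : ∑ j, (W j)ᴴ * W j = 1) {A : Matrix (Fin m) (Fin m) ℂ} (hA : A.IsHermitian)
    {I : Set ℝ} (hAspec : spectrum ℝ A ⊆ I)
    {f : ℝ → ℝ} (hf : ConvexOn ℝ I f) (u : EuclideanSpace ℂ (Fin n)) (hu : ⟪u, u⟫_ℂ = 1) :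
    f (Complex.re (star ⇑u ⬝ᵥ ((∑ j, (W j)ᴴ * A * W j) *ᵥ ⇑u))) ≤
      Complex.re (star ⇑u ⬝ᵥ ((∑ j, (W j)ᴴ * cfc f A * W j) *ᵥ ⇑u)) := by
  set a := hA.eigenvectorBasis with ha
  set x : Fin r → EuclideanSpace ℂ (Fin m) :=
    fun j => (WithLp.equiv 2 (Fin m → ℂ)).symm (W j *ᵥ ⇑u) with hx
  set wgt : Fin m → ℝ := fun q => ∑ j, Complex.normSq ⟪a q, x j⟫_ℂ with hwgt
  have key : ∀ (M : Matrix (Fin m) (Fin m) ℂ), M.IsHermitian → ∀ ν : Fin m → ℝ,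
      (∀ q, M *ᵥ ⇑(a q) = ((ν q : ℝ) : ℂ) • ⇑(a q)) →
      star ⇑u ⬝ᵥ ((∑ j, (W j)ᴴ * M * W j) *ᵥ ⇑u) = ((∑ q, ν q * wgt q : ℝ) : ℂ) := by
    intro M hM ν hν
    have hper : ∀ j, star ⇑u ⬝ᵥ (((W j)ᴴ * M * W j) *ᵥ ⇑u)
        = ((∑ q, ν q * Complex.normSq ⟪a q, x j⟫_ℂ : ℝ) : ℂ) := by
      intro j
      have e1 : ((W j)ᴴ * M * W j) *ᵥ ⇑u = (W j)ᴴ *ᵥ (M *ᵥ (W j *ᵥ ⇑u)) := by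
        rw [← Matrix.mulVec_mulVec, ← Matrix.mulVec_mulVec]
      have e2 : star ⇑u ⬝ᵥ ((W j)ᴴ *ᵥ (M *ᵥ (W j *ᵥ ⇑u)))
          = star (W j *ᵥ ⇑u) ⬝ᵥ (M *ᵥ (W j *ᵥ ⇑u)) := by
        rw [Matrix.dotProduct_mulVec, ← Matrix.star_mulVec]
      have e3 : star (W j *ᵥ ⇑u) ⬝ᵥ (M *ᵥ (W j *ᵥ ⇑u)) = star ⇑(x j) ⬝ᵥ (M *ᵥ ⇑(x j)) := rfl
      rw [e1, e2, e3, dot_expand M hM a ν hν (x j)]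
    have esum : (∑ j, (W j)ᴴ * M * W j) *ᵥ ⇑u = ∑ j, ((W j)ᴴ * M * W j) *ᵥ ⇑u := by
      funext i
      simp only [Matrix.mulVec, dotProduct, Finset.sum_apply, Finset.sum_apply',
        Matrix.sum_apply, Finset.sum_mul]
      rw [Finset.sum_comm]
    have dsum : star ⇑u ⬝ᵥ (∑ j, ((W j)ᴴ * M * W j) *ᵥ ⇑u)
        = ∑ j, star ⇑u ⬝ᵥ (((W j)ᴴ * M * W j) *ᵥ ⇑u) := by
      simp only [dotProduct, Finset.sum_apply, Finset.mul_sum]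
      rw [Finset.sum_comm]
    rw [esum, dsum, Finset.sum_congr rfl fun j _ => hper j]
    push_cast
    rw [Finset.sum_comm]
    refine Finset.sum_congr rfl fun q _ => ?_
    rw [hwgt]
    push_cast
    rw [Finset.mul_sum]
  have hwgt_one : ∑ q, wgt q = 1 := by
    have h1 := key 1 (Matrix.isHermitian_one) (fun _ => 1)
      (fun q => by rw [Matrix.one_mulVec]; simp)
    have h2 : (∑ j, (W j)ᴴ * (1 : Matrix (Fin m) (Fin m) ℂ) * W j) = 1 := by
      rw [← hW]; exact Finset.sum_congr rfl fun j _ => by rw [Matrix.mul_one]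
    rw [h2] at h1
    have h3 : star ⇑u ⬝ᵥ ((1 : Matrix (Fin n) (Fin n) ℂ) *ᵥ ⇑u) = 1 := by
      rw [Matrix.one_mulVec, dotProduct_comm]; exact hu
    rw [h3] at h1
    have h4 : (∑ q, 1 * wgt q : ℝ) = 1 := by exact_mod_cast h1.symm
    simpa using h4
  have hwgt_nonneg : ∀ q, 0 ≤ wgt q := fun q =>
    Finset.sum_nonneg fun j _ => Complex.normSq_nonneg _
  have hmem : ∀ q, hA.eigenvalues q ∈ I := fun q =>
    hAspec (hA.eigenvalues_mem_spectrum_real q)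
  have hAkey := key A hA hA.eigenvalues (fun q => by
    have := hA.mulVec_eigenvectorBasis q
    rw [this, RCLike.real_smul_eq_coe_smul (K := ℂ)]; rfl)
  have hfAkey := key (cfc f A) (cfc_predicate f A) (fun q => f (hA.eigenvalues q))
    (fun q => cfc_mulVec' hA f q)
  rw [hAkey, hfAkey, Complex.ofReal_re, Complex.ofReal_re]
  have hjen := hf.map_sum_le (t := Finset.univ) (w := wgt) (p := hA.eigenvalues)
    (fun q _ => hwgt_nonneg q) hwgt_one (fun q _ => hmem q)
  calc f (∑ q, hA.eigenvalues q * wgt q)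
      = f (∑ q, wgt q • hA.eigenvalues q) := by
        congr 1; exact Finset.sum_congr rfl fun q _ => by rw [smul_eq_mul, mul_comm]
    _ ≤ ∑ q, wgt q • f (hA.eigenvalues q) := hjen
    _ = ∑ q, f (hA.eigenvalues q) * wgt q := Finset.sum_congr rfl fun q _ => by
        rw [smul_eq_mul, mul_comm]

end helpers

open scoped InnerProductSpace in
/-- Jensen's inequality for the completely positive unital map
`A ↦ Σ_j W_j* A W_j` (where `Σ_j W_j* W_j = 1`): for `f` convex on an open interval `I`
and `A` Hermitian with spectrum in `I`,
`Σ_{i≤k} λ_i(f(Σ_j W_j* A W_j)) ≤ Σ_{i≤k} λ_i(Σ_j W_j* f(A) W_j)` for every `k`. -/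
theorem eigDesc_sum_cfc_conj_sum_le {m n r : ℕ}
    (W : Fin r → Matrix (Fin m) (Fin n) ℂ)
    (hW : ∑ j, (W j)ᴴ * W j = 1)
    (A : Matrix (Fin m) (Fin m) ℂ) (hA : A.IsHermitian)
    (I : Set ℝ) (hI_open : IsOpen I) (hI_conn : I.OrdConnected)
    (hAspec : spectrum ℝ A ⊆ I)
    (f : ℝ → ℝ) (hf : ConvexOn ℝ I f) :
    ∀ k : ℕ, k ≤ n →
      ∑ i ∈ Finset.filter (fun i : Fin n => (i : ℕ) < k) Finset.univ,
          eigDesc (cfc f (∑ j, (W j)ᴴ * A * W j)) i ≤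
        ∑ i ∈ Finset.filter (fun i : Fin n => (i : ℕ) < k) Finset.univ,
          eigDesc (∑ j, (W j)ᴴ * cfc f A * W j) i := by
  intro k hk
  have hB : (∑ j, (W j)ᴴ * A * W j).IsHermitian := isHermitian_conj_sum W hA
  have hfA : (cfc f A).IsHermitian := cfc_predicate f A
  have hD : (cfc f (∑ j, (W j)ᴴ * A * W j)).IsHermitian := cfc_predicate f _
  have hC : (∑ j, (W j)ᴴ * cfc f A * W j).IsHermitian := isHermitian_conj_sum W hfA
  set Flt := Finset.filter (fun i : Fin n => (i : ℕ) < k) Finset.univ with hFlt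
  -- index sets
  set gD : Fin n → Fin n := fun i => Tuple.sort hD.eigenvalues i.rev with hgD
  set gS : Fin n → Fin n := fun i => Tuple.sort (f ∘ hB.eigenvalues) i.rev with hgS
  have hgDinj : Set.InjOn gD Flt := fun i _ j _ h =>
    Fin.rev_injective ((Tuple.sort hD.eigenvalues).injective h)
  have hgSinj : Set.InjOn gS Flt := fun i _ j _ h =>
    Fin.rev_injective ((Tuple.sort (f ∘ hB.eigenvalues)).injective h)
  set T := Flt.image gD with hT
  set S := Flt.image gS with hS
  have hTcard : T.card = k := by rw [hT, Finset.card_image_of_injOn hgDinj, hFlt,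
    card_filter_lt' hk]
  have hScard : S.card = k := by rw [hS, Finset.card_image_of_injOn hgSinj, hFlt,
    card_filter_lt' hk]
  -- Step 1 : left side as sum of quadratic forms over T
  have hleft : ∑ i ∈ Flt, eigDesc (cfc f (∑ j, (W j)ᴴ * A * W j)) i
      = ∑ i ∈ T, Complex.re (star ⇑(hD.eigenvectorBasis i) ⬝ᵥ
          ((cfc f (∑ j, (W j)ᴴ * A * W j)) *ᵥ ⇑(hD.eigenvectorBasis i))) := by
    rw [hT, Finset.sum_image (fun i hi j hj h => hgDinj hi hj h)]
    refine Finset.sum_congr rfl fun i _ => ?_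
    rw [eigDesc, dif_pos hD]
    exact hD.eigenvalues_eq (gD i)
  -- Step 2 : Ky Fan bound for the left side
  have h2 := kyFan hk (cfc f (∑ j, (W j)ᴴ * A * W j)) hD hB.eigenvectorBasis
    (f ∘ hB.eigenvalues) (fun p => cfc_mulVec' hB f p) hD.eigenvectorBasis T hTcard
  -- Step 3 : rewrite the bound as a sum over S
  have h3 : ∑ i ∈ Flt, ((f ∘ hB.eigenvalues) ∘ Tuple.sort (f ∘ hB.eigenvalues)) i.rev
      = ∑ p ∈ S, f (hB.eigenvalues p) := by
    rw [hS, Finset.sum_image (fun i hi j hj h => hgSinj hi hj h)]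
    exact Finset.sum_congr rfl fun i _ => rfl
  -- Step 4 : Jensen for each eigenvector of B
  have h4 : ∀ p : Fin n, f (hB.eigenvalues p) ≤ Complex.re (star ⇑(hB.eigenvectorBasis p) ⬝ᵥ
      ((∑ j, (W j)ᴴ * cfc f A * W j) *ᵥ ⇑(hB.eigenvectorBasis p))) := by
    intro p
    have hu1 : ⟪hB.eigenvectorBasis p, hB.eigenvectorBasis p⟫_ℂ = 1 := by
      rw [inner_self_eq_norm_sq_to_K, hB.eigenvectorBasis.orthonormal.1 p]; norm_num
    have hmu : hB.eigenvalues p = Complex.re (star ⇑(hB.eigenvectorBasis p) ⬝ᵥ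
        ((∑ j, (W j)ᴴ * A * W j) *ᵥ ⇑(hB.eigenvectorBasis p))) := hB.eigenvalues_eq p
    rw [hmu]
    exact jensen_step W hW hA hAspec hf _ hu1
  -- Step 5 : Ky Fan bound for the right side
  have h5 := kyFan hk (∑ j, (W j)ᴴ * cfc f A * W j) hC hC.eigenvectorBasis
    hC.eigenvalues (fun p => by
      have := hC.mulVec_eigenvectorBasis p
      rw [this, RCLike.real_smul_eq_coe_smul (K := ℂ)]; rfl)
    hB.eigenvectorBasis S hScard
  have hright : ∑ i ∈ Flt, (hC.eigenvalues ∘ Tuple.sort hC.eigenvalues) i.rev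
      = ∑ i ∈ Flt, eigDesc (∑ j, (W j)ᴴ * cfc f A * W j) i := by
    refine Finset.sum_congr rfl fun i _ => ?_
    rw [eigDesc, dif_pos hC]
  calc ∑ i ∈ Flt, eigDesc (cfc f (∑ j, (W j)ᴴ * A * W j)) i
      = ∑ i ∈ T, Complex.re (star ⇑(hD.eigenvectorBasis i) ⬝ᵥ
          ((cfc f (∑ j, (W j)ᴴ * A * W j)) *ᵥ ⇑(hD.eigenvectorBasis i))) := hleft
    _ ≤ ∑ i ∈ Flt, ((f ∘ hB.eigenvalues) ∘ Tuple.sort (f ∘ hB.eigenvalues)) i.rev := h2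
    _ = ∑ p ∈ S, f (hB.eigenvalues p) := h3
    _ ≤ ∑ p ∈ S, Complex.re (star ⇑(hB.eigenvectorBasis p) ⬝ᵥ
          ((∑ j, (W j)ᴴ * cfc f A * W j) *ᵥ ⇑(hB.eigenvectorBasis p))) :=
        Finset.sum_le_sum fun p _ => h4 p
    _ ≤ ∑ i ∈ Flt, (hC.eigenvalues ∘ Tuple.sort hC.eigenvalues) i.rev := h5
    _ = ∑ i ∈ Flt, eigDesc (∑ j, (W j)ᴴ * cfc f A * W j) i := hright
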